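/- Let K be a field and f₁, f₂ ∈ K[x] nonconstant with a common composite h ∈ K[x]. Suppose α, β ∈ K̄ satisfy h'(α) · h'(β) ≠ 0 and f_i(α) = f_i(β) for both i = 1, 2. Then f₁'(α) · f₂'(β) = f₁'(β) · f₂'(α). -/
import Mathlib


open Polynomial

theorem stmt_17 (K : Type*) [Field K] (f₁ f₂ : K[X])
    (hf₁ : f₁.natDegree ≠ 0) (hf₂ : f₂.natDegree ≠ 0)
    (h F₁ F₂ : K[X]) (hF₁ : F₁.natDegree ≠ 0) (hF₂ : F₂.natDegree ≠ 0)
    (hcomp₁ : F₁.comp f₁ = h) (hcomp₂ : F₂.comp f₂ = h)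
    (α β : AlgebraicClosure K)
    (hder : Polynomial.aeval α h.derivative * Polynomial.aeval β h.derivative ≠ 0)
    (heq₁ : Polynomial.aeval α f₁ = Polynomial.aeval β f₁)
    (heq₂ : Polynomial.aeval α f₂ = Polynomial.aeval β f₂) :
    Polynomial.aeval α f₁.derivative * Polynomial.aeval β f₂.derivative =
      Polynomial.aeval β f₁.derivative * Polynomial.aeval α f₂.derivative := by
  subst hcomp₂
  set A := aeval (aeval α f₁) F₁.derivative with hA
  set B := aeval (aeval α f₂) F₂.derivative with hB
  have d1α : aeval α (F₁.comp f₁).derivative = A * aeval α f₁.derivative := by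
    rw [derivative_comp, map_mul, aeval_comp, hA]; exact mul_comm _ _
  have d1β : aeval β (F₁.comp f₁).derivative = A * aeval β f₁.derivative := by
    rw [derivative_comp, map_mul, aeval_comp, ← heq₁, hA]; exact mul_comm _ _
  have d2α : aeval α (F₂.comp f₂).derivative = B * aeval α f₂.derivative := by
    rw [derivative_comp, map_mul, aeval_comp, hB]; exact mul_comm _ _
  have d2β : aeval β (F₂.comp f₂).derivative = B * aeval β f₂.derivative := by
    rw [derivative_comp, map_mul, aeval_comp, ← heq₂, hB]; exact mul_comm _ _
  rw [hcomp₁] at d1α d1β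
  have hAne : A ≠ 0 := by
    intro h0
    apply hder
    rw [d1α, h0, zero_mul, zero_mul]
  have hBne : B ≠ 0 := by
    intro h0
    apply hder
    rw [d2β, h0, zero_mul, mul_zero]
  have e1 : A * aeval α f₁.derivative = B * aeval α f₂.derivative := d1α.symm.trans d2α
  have e2 : A * aeval β f₁.derivative = B * aeval β f₂.derivative := d1β.symm.trans d2β
  have key : A * B * (aeval α f₁.derivative * aeval β f₂.derivative)
      = A * B * (aeval β f₁.derivative * aeval α f₂.derivative) := by
    linear_combination (B * aeval β f₂.derivative) * e1 - (B * aeval α f₂.derivative) * e2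
  exact mul_left_cancel₀ (mul_ne_zero hAne hBne) key
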